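/- Let L be a bounded distributive lattice and let f : L^n → L be a lattice polynomial function. If f is associative, then f(x) = a ∨ (b ∧ x_1) ∨ (⋁_{i=1}^{n} (b ∧ c ∧ x_i)) ∨ (c ∧ x_n) ∨ (d ∧ ⋀_{i=1}^{n} x_i) for all x ∈ L^n, where a = f(0,…,0), b = f(1,0,…,0), c = f(0,…,0,1), and d = f(1,…,1). -/

import Mathlib

variable {X : Type*}

/-- The string consisting of the single letter `g y` if `y` is nonempty, and the
empty string if `y` is empty (the convention `g ε = ε`). -/
def strOf (g : List X → X) (y : List X) : List X :=
  match y with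
  | [] => []
  | _ => [g y]

/-- Associativity for functions on strings. -/
def AssocStar (g : List X → X) : Prop :=
  ∀ x y z x' y' z' : List X, x ++ y ++ z = x' ++ y' ++ z' →
    g (x ++ strOf g y ++ z) = g (x' ++ strOf g y' ++ z')

/-- Range-idempotency for functions on strings. -/
def RangeIdem (g : List X → X) : Prop :=
  ∀ x : List X, x ≠ [] → ∀ n : ℕ, 1 ≤ n → g (List.replicate n (g x)) = g x

/-- Application of an `n`-ary function to a list of length `n`. -/
def liftF {n : ℕ} (f : (Fin n → X) → X) (l : List X) (h : l.length = n) : X :=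
  f fun i => l.get (Fin.cast h.symm i)

/-- Associativity for `n`-ary functions. -/
def AssocFin {n : ℕ} (f : (Fin n → X) → X) : Prop :=
  ∀ (x z x' z' y y' : List X) (hy : y.length = n) (hy' : y'.length = n),
    x.length + z.length = n - 1 → x'.length + z'.length = n - 1 →
    x ++ y ++ z = x' ++ y' ++ z' →
    ∀ (h : (x ++ [liftF f y hy] ++ z).length = n)
      (h' : (x' ++ [liftF f y' hy'] ++ z').length = n),
      liftF f (x ++ [liftF f y hy] ++ z) h = liftF f (x' ++ [liftF f y' hy'] ++ z') h'

variable {L : Type*} [DistribLattice L] [BoundedOrder L]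

/-- Lattice polynomial functions: representable in disjunctive normal form. -/
def IsPolynomialFn {n : ℕ} (f : (Fin n → L) → L) : Prop :=
  ∃ α : Finset (Fin n) → L,
    ∀ x : Fin n → L, f x = Finset.univ.sup fun I : Finset (Fin n) => α I ⊓ I.inf x

/-- The ternary median. -/
def med (a b c : L) : L := (a ⊔ b) ⊓ (a ⊔ c) ⊓ (b ⊔ c)

/-- The characteristic vector of `I ⊆ [n]`. -/
def charVec {n : ℕ} (I : Finset (Fin n)) : Fin n → L := fun i => if i ∈ I then ⊤ else ⊥

/-- A function on strings all of whose `n`-ary components (`n ≥ 1`) are polynomial. -/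
def IsPolyStar (g : List L → L) : Prop :=
  ∀ n : ℕ, 1 ≤ n → IsPolynomialFn fun x : Fin n → L => g (List.ofFn x)

section Canon
open Finset
variable {L : Type*} [DistribLattice L] [BoundedOrder L] {n : ℕ} {f : (Fin n → L) → L}

lemma inf_charVec (I J : Finset (Fin n)) :
    J.inf (charVec I : Fin n → L) = if J ⊆ I then ⊤ else ⊥ := by
  split_ifs with h
  · refine le_antisymm le_top (Finset.le_inf fun i hi => ?_)
    simp [charVec, h hi]
  · obtain ⟨i, hiJ, hiI⟩ := Finset.not_subset.mp h
    refine le_antisymm ?_ bot_le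
    calc J.inf (charVec I : Fin n → L) ≤ charVec I i := Finset.inf_le hiJ
    _ = ⊥ := by simp [charVec, hiI]

lemma canon (hf : IsPolynomialFn f) (x : Fin n → L) :
    f x = Finset.univ.sup fun I : Finset (Fin n) => f (charVec I) ⊓ I.inf x := by
  obtain ⟨α, hα⟩ := hf
  have hβ : ∀ I : Finset (Fin n), f (charVec I)
      = Finset.univ.sup fun J : Finset (Fin n) => α J ⊓ if J ⊆ I then ⊤ else ⊥ := by
    intro I
    rw [hα]
    exact Finset.sup_congr rfl fun J _ => by rw [inf_charVec]
  apply le_antisymm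
  · rw [hα]
    refine Finset.sup_le fun I _ => ?_
    have : α I ≤ f (charVec I) := by
      rw [hβ]
      refine le_trans ?_ (Finset.le_sup (Finset.mem_univ I))
      simp
    exact le_trans (inf_le_inf_right _ this)
      (Finset.le_sup (f := fun I => f (charVec I) ⊓ I.inf x) (Finset.mem_univ I))
  · refine Finset.sup_le fun I _ => ?_
    rw [hβ, Finset.sup_inf_distrib_right]
    refine Finset.sup_le fun J _ => ?_
    split_ifs with h
    · rw [hα]
      refine le_trans ?_ (Finset.le_sup (Finset.mem_univ J))
      simp only [inf_top_eq]
      exact inf_le_inf_left _ (Finset.inf_mono h)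
    · simp

lemma beta_mono (hf : IsPolynomialFn f) {I J : Finset (Fin n)} (hIJ : I ⊆ J) :
    f (charVec I) ≤ f (charVec J) := by
  obtain ⟨α, hα⟩ := hf
  rw [hα, hα]
  refine Finset.sup_le fun K _ => le_trans ?_ (Finset.le_sup (Finset.mem_univ K))
  refine inf_le_inf_left _ (Finset.le_inf fun i hi => le_trans (Finset.inf_le hi) ?_)
  by_cases h : i ∈ I
  · simp [charVec, h, hIJ h]
  · simp [charVec, h]

end Canon
section Eval
open Finset
variable {L : Type*} [DistribLattice L] [BoundedOrder L] {n : ℕ} {f : (Fin n → L) → L}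

lemma evalMixed (hf : IsPolynomialFn f) (S : Finset (Fin n)) (p : Fin n) (hp : p ∉ S) (u : L) :
    f (Function.update (charVec S) p u)
      = f (charVec S) ⊔ (f (charVec (insert p S)) ⊓ u) := by
  rw [canon hf]
  have key : ∀ I : Finset (Fin n), I.inf (Function.update (charVec S) p u)
      = if p ∈ I then (if I.erase p ⊆ S then u else ⊥) else (if I ⊆ S then ⊤ else ⊥) := by
    intro I
    have herase : (I.erase p).inf (Function.update (charVec S) p u)
        = (I.erase p).inf (charVec S) := by
      refine Finset.inf_congr rfl fun i hi => ?_
      have : i ≠ p := Finset.ne_of_mem_erase hi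
      simp [Function.update_of_ne this]
    by_cases hpI : p ∈ I
    · have hIinf : I.inf (Function.update (charVec S) p u)
          = u ⊓ (I.erase p).inf (charVec S) := by
        conv_lhs => rw [← Finset.insert_erase hpI]
        rw [Finset.inf_insert, Function.update_self, herase]
      rw [hIinf, inf_charVec]
      simp only [hpI, if_pos]
      split_ifs <;> simp
    · have : I.erase p = I := Finset.erase_eq_of_notMem hpI
      rw [← this, herase, inf_charVec, this]
      simp [hpI]
  apply le_antisymm
  · refine Finset.sup_le fun I _ => ?_
    rw [key]
    by_cases hpI : p ∈ I
    · simp only [hpI, if_pos]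
      split_ifs with hsub
      · refine le_sup_of_le_right (inf_le_inf_right u ?_)
        refine beta_mono hf ?_
        intro i hi
        by_cases hip : i = p
        · simp [hip]
        · exact Finset.mem_insert_of_mem (hsub (Finset.mem_erase.mpr ⟨hip, hi⟩))
      · simp
    · simp only [hpI, if_neg, if_false]
      split_ifs with hsub
      · exact le_sup_of_le_left (le_trans inf_le_left (beta_mono hf hsub))
      · simp
  · refine sup_le ?_ ?_
    · refine le_trans ?_ (Finset.le_sup (f := fun I : Finset (Fin n) =>
        f (charVec I) ⊓ I.inf (Function.update (charVec S) p u)) (Finset.mem_univ S))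
      rw [key]
      simp [hp]
    · refine le_trans ?_ (Finset.le_sup (f := fun I : Finset (Fin n) =>
        f (charVec I) ⊓ I.inf (Function.update (charVec S) p u)) (Finset.mem_univ (insert p S)))
      rw [key]
      simp [Finset.erase_insert hp, hp]

end Eval
set_option linter.unusedSectionVars false
section Master
open Finset
variable {L : Type*} [DistribLattice L] [BoundedOrder L] {n : ℕ} {f : (Fin n → L) → L}

/-- The outer index set for a split at `k`. -/
def outF (n : ℕ) (S : ℕ → Bool) (k : ℕ) : Finset (Fin n) :=
  Finset.univ.filter fun i => ((i : ℕ) < k ∧ S i) ∨ (k < (i : ℕ) ∧ S ((i : ℕ) + n - 1))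

/-- The inner index set for a split at `k`. -/
def innF (n : ℕ) (S : ℕ → Bool) (k : ℕ) : Finset (Fin n) :=
  Finset.univ.filter fun j => S (k + (j : ℕ))

lemma liftF_eq {l : List L} {h : l.length = n} {g : Fin n → L}
    (hg : ∀ (i : ℕ) (hi : i < l.length), l[i] = g ⟨i, h ▸ hi⟩) :
    liftF f l h = f g := by
  unfold liftF
  congr 1
  funext i
  have hi : (i : ℕ) < l.length := h ▸ i.isLt
  have := hg i hi
  simpa [List.get_eq_getElem] using this

lemma concat_split (w : ℕ → L) (k : ℕ) (hn : 1 ≤ n) (hk : k ≤ n - 1) :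
    (List.ofFn fun i : Fin k => w i) ++ (List.ofFn fun j : Fin n => w (k + j)) ++
      (List.ofFn fun i : Fin (n - 1 - k) => w (k + n + i))
    = List.ofFn fun t : Fin (2 * n - 1) => w t := by
  apply List.ext_getElem
  · simp; omega
  · intro t h1 h2
    simp only [List.getElem_append, List.getElem_ofFn, List.length_append, List.length_ofFn]
    split_ifs with h3 h4 <;>
      first
        | rfl
        | (congr 1; omega)

end Master
section Master2
set_option linter.unusedSectionVars false
open Finset
variable {L : Type*} [DistribLattice L] [BoundedOrder L] {n : ℕ} {f : (Fin n → L) → L}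

lemma k_not_mem_outF (hn : 1 ≤ n) (S : ℕ → Bool) (k : ℕ) (hk : k ≤ n - 1) :
    (⟨k, by omega⟩ : Fin n) ∉ outF n S k := by
  simp [outF]

lemma masterVal (hn : 1 ≤ n) (hf : IsPolynomialFn f) (S : ℕ → Bool) (w : ℕ → L)
    (hwS : ∀ t, w t = if S t then (⊤ : L) else ⊥) (k : ℕ) (hk : k ≤ n - 1) (v : L)
    (h : ((List.ofFn fun i : Fin k => w i) ++ [v] ++
      (List.ofFn fun i : Fin (n - 1 - k) => w (k + n + i))).length = n) :
    liftF f ((List.ofFn fun i : Fin k => w i) ++ [v] ++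
      (List.ofFn fun i : Fin (n - 1 - k) => w (k + n + i))) h
      = f (charVec (outF n S k)) ⊔
        (f (charVec (insert (⟨k, by omega⟩ : Fin n) (outF n S k))) ⊓ v) := by
  rw [← evalMixed hf (outF n S k) ⟨k, by omega⟩ (k_not_mem_outF hn S k hk) v]
  apply liftF_eq
  intro i hi
  have hin : i < n := by
    have := hi
    simp only [List.length_append, List.length_ofFn, List.length_singleton] at this
    omega
  rcases lt_trichotomy i k with hik | hik | hik
  · have h1 : i < ((List.ofFn fun i : Fin k => w i) ++ [v]).length := by
      simp; omega
    rw [List.getElem_append, dif_pos h1, List.getElem_append, dif_pos (by simpa using hik),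
      List.getElem_ofFn]
    have hne : (⟨i, hin⟩ : Fin n) ≠ ⟨k, by omega⟩ := by
      simp [Fin.ext_iff]; omega
    rw [Function.update_of_ne hne]
    have h2 : ¬ k < i := by omega
    simp [charVec, outF, hwS, hik, h2]
  · subst hik
    have h1 : i < ((List.ofFn fun i : Fin i => w i) ++ [v]).length := by simp
    rw [List.getElem_append, dif_pos h1, List.getElem_append, dif_neg (by simp)]
    simp
  · have h1 : ¬ i < ((List.ofFn fun i : Fin k => w i) ++ [v]).length := by
      simp; omega
    rw [List.getElem_append, dif_neg h1, List.getElem_ofFn]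
    have hne : (⟨i, hin⟩ : Fin n) ≠ ⟨k, by omega⟩ := by
      simp [Fin.ext_iff]; omega
    rw [Function.update_of_ne hne]
    have h2 : ¬ i < k := by omega
    have h3 : k + n + ((i - ((List.ofFn fun i : Fin k => w i) ++ [v]).length)) = i + n - 1 := by
      simp; omega
    rw [h3, hwS]
    simp [charVec, outF, h2, hik]

lemma innerVal (hf : IsPolynomialFn f) (S : ℕ → Bool) (w : ℕ → L)
    (hwS : ∀ t, w t = if S t then (⊤ : L) else ⊥) (k : ℕ)
    (hy : (List.ofFn fun j : Fin n => w (k + j)).length = n) :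
    liftF f (List.ofFn fun j : Fin n => w (k + j)) hy = f (charVec (innF n S k)) := by
  apply liftF_eq
  intro i hi
  rw [List.getElem_ofFn]
  simp [charVec, innF, hwS]

lemma master (hn : 1 ≤ n) (hf : IsPolynomialFn f) (hassoc : AssocFin f)
    (S : ℕ → Bool) (k k' : ℕ) (hk : k ≤ n - 1) (hk' : k' ≤ n - 1) :
    f (charVec (outF n S k)) ⊔
      (f (charVec (insert (⟨k, by omega⟩ : Fin n) (outF n S k))) ⊓ f (charVec (innF n S k)))
    = f (charVec (outF n S k')) ⊔
      (f (charVec (insert (⟨k', by omega⟩ : Fin n) (outF n S k'))) ⊓ f (charVec (innF n S k'))) := by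
  set w : ℕ → L := fun t => if S t then ⊤ else ⊥ with hw
  have hwS : ∀ t, w t = if S t then (⊤ : L) else ⊥ := fun t => rfl
  have hy : ∀ m, (List.ofFn fun j : Fin n => w (m + j)).length = n := fun m => by simp
  have hlen : ∀ m, m ≤ n - 1 → ((List.ofFn fun i : Fin m => w i) ++
      [liftF f (List.ofFn fun j : Fin n => w (m + j)) (hy m)] ++
      (List.ofFn fun i : Fin (n - 1 - m) => w (m + n + i))).length = n := by
    intro m hm
    simp
    omega
  have key := hassoc (List.ofFn fun i : Fin k => w i)
    (List.ofFn fun i : Fin (n - 1 - k) => w (k + n + i))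
    (List.ofFn fun i : Fin k' => w i)
    (List.ofFn fun i : Fin (n - 1 - k') => w (k' + n + i))
    (List.ofFn fun j : Fin n => w (k + j)) (List.ofFn fun j : Fin n => w (k' + j))
    (hy k) (hy k') (by simp; omega) (by simp; omega)
    (by rw [concat_split w k hn hk, concat_split w k' hn hk'])
    (hlen k hk) (hlen k' hk')
  have h1 := masterVal (f := f) hn hf S w hwS k hk
    (liftF f (List.ofFn fun j : Fin n => w (k + j)) (hy k)) (hlen k hk)
  have h2 := masterVal (f := f) hn hf S w hwS k' hk'
    (liftF f (List.ofFn fun j : Fin n => w (k' + j)) (hy k')) (hlen k' hk')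
  have main := h1.symm.trans (key.trans h2)
  rw [← innerVal hf S w hwS k (hy k), ← innerVal hf S w hwS k' (hy k')]
  exact main

end Master2
section Sgen
set_option linter.unusedSectionVars false
open Finset
variable {L : Type*} [DistribLattice L] [BoundedOrder L] {n : ℕ} {f : (Fin n → L) → L}

/-- The 0-1 string of length `2n-1` with left copy `A` and right (shifted) copy `B`. -/
def Sgen (n : ℕ) (A B : Finset (Fin n)) : ℕ → Bool := fun t =>
  (if h : t < n then decide ((⟨t, h⟩ : Fin n) ∈ A) else false) ||
  (if h : n - 1 ≤ t ∧ t - (n - 1) < n then decide ((⟨t - (n - 1), h.2⟩ : Fin n) ∈ B) else false)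

lemma Sgen_eq_true_iff (A B : Finset (Fin n)) (t : ℕ) :
    Sgen n A B t = true ↔
      (∃ h : t < n, (⟨t, h⟩ : Fin n) ∈ A) ∨
      (∃ h : n - 1 ≤ t ∧ t - (n - 1) < n, (⟨t - (n - 1), h.2⟩ : Fin n) ∈ B) := by
  unfold Sgen
  rw [Bool.or_eq_true]
  apply or_congr
  · split_ifs with h
    · simp [h]
    · simp only [Bool.false_eq_true, false_iff]
      rintro ⟨hp, _⟩; exact h hp
  · split_ifs with h
    · simp [h]
    · simp only [Bool.false_eq_true, false_iff]
      rintro ⟨hp, _⟩; exact h hp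

lemma mem_outF_Sgen (hn : 1 ≤ n) (A B : Finset (Fin n)) (k : ℕ) (hk : k ≤ n - 1) (i : Fin n) :
    i ∈ outF n (Sgen n A B) k ↔ ((i : ℕ) < k ∧ i ∈ A) ∨ (k < (i : ℕ) ∧ i ∈ B) := by
  simp only [outF, Finset.mem_filter, Finset.mem_univ, true_and, Sgen_eq_true_iff]
  constructor
  · rintro (⟨h1, (⟨h2, h3⟩ | ⟨h2, h3⟩)⟩ | ⟨h1, (⟨h2, h3⟩ | ⟨h2, h3⟩)⟩)
    · exact Or.inl ⟨h1, by simpa using h3⟩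
    · exact absurd h2.1 (by omega)
    · exact absurd h2 (by omega)
    · refine Or.inr ⟨h1, ?_⟩
      have e : (⟨(i : ℕ) + n - 1 - (n - 1), h2.2⟩ : Fin n) = i := Fin.ext (by simp; omega)
      rwa [e] at h3
  · rintro (⟨h1, h2⟩ | ⟨h1, h2⟩)
    · exact Or.inl ⟨h1, Or.inl ⟨i.isLt, by simpa using h2⟩⟩
    · refine Or.inr ⟨h1, Or.inr ⟨⟨by omega, by omega⟩, ?_⟩⟩
      have e : (⟨(i : ℕ) + n - 1 - (n - 1), by omega⟩ : Fin n) = i := Fin.ext (by simp; omega)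
      rw [e]; exact h2

lemma mem_innF_Sgen (A B : Finset (Fin n)) (k : ℕ) (j : Fin n) :
    j ∈ innF n (Sgen n A B) k ↔
      (∃ h : k + (j : ℕ) < n, (⟨k + (j : ℕ), h⟩ : Fin n) ∈ A) ∨
      (∃ h : n - 1 ≤ k + (j : ℕ) ∧ k + (j : ℕ) - (n - 1) < n,
        (⟨k + (j : ℕ) - (n - 1), h.2⟩ : Fin n) ∈ B) := by
  simp only [innF, Finset.mem_filter, Finset.mem_univ, true_and, Sgen_eq_true_iff]

end Sgen
section MLem
set_option linter.unusedSectionVars false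
open Finset
variable {L : Type*} [DistribLattice L] [BoundedOrder L] {n : ℕ} {f : (Fin n → L) → L}

lemma M1 (hn : 1 ≤ n) (hf : IsPolynomialFn f) (hassoc : AssocFin f)
    (I : Finset (Fin n)) (hlast : (⟨n - 1, Nat.sub_lt hn Nat.one_pos⟩ : Fin n) ∉ I) :
    f (charVec I) = f (charVec (∅ : Finset (Fin n))) ⊔
      (f (charVec ({⟨0, hn⟩} : Finset (Fin n))) ⊓ f (charVec I)) := by
  have key := master hn hf hassoc (Sgen n I ∅) (n - 1) 0 le_rfl (by omega)
  have hout1 : outF n (Sgen n I ∅) (n - 1) = I := by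
    ext i
    rw [mem_outF_Sgen hn I ∅ (n - 1) le_rfl]
    constructor
    · rintro (⟨h1, h2⟩ | ⟨h1, h2⟩)
      · exact h2
      · exact absurd h1 (by omega)
    · intro hi
      refine Or.inl ⟨?_, hi⟩
      rcases Nat.lt_or_ge (i : ℕ) (n - 1) with h | h
      · exact h
      · exfalso
        apply hlast
        have e : i = (⟨n - 1, Nat.sub_lt hn Nat.one_pos⟩ : Fin n) := Fin.ext (by simp; omega)
        rwa [e] at hi
  have hinn1 : innF n (Sgen n I ∅) (n - 1) = ∅ := by
    ext j
    simp only [Finset.notMem_empty, iff_false]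
    rw [mem_innF_Sgen]
    rintro (⟨h1, h2⟩ | ⟨h1, h2⟩)
    · apply hlast
      have e : (⟨n - 1 + (j : ℕ), h1⟩ : Fin n) = ⟨n - 1, Nat.sub_lt hn Nat.one_pos⟩ := Fin.ext (by simp; omega)
      rwa [e] at h2
    · exact absurd h2 (Finset.notMem_empty _)
  have hout0 : outF n (Sgen n I ∅) 0 = ∅ := by
    ext i
    simp only [Finset.notMem_empty, iff_false]
    rw [mem_outF_Sgen hn I ∅ 0 (by omega)]
    rintro (⟨h1, _⟩ | ⟨_, h2⟩)
    · omega
    · exact absurd h2 (Finset.notMem_empty _)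
  have hinn0 : innF n (Sgen n I ∅) 0 = I := by
    ext j
    rw [mem_innF_Sgen]
    constructor
    · rintro (⟨h1, h2⟩ | ⟨h1, h2⟩)
      · have e : (⟨0 + (j : ℕ), h1⟩ : Fin n) = j := Fin.ext (by simp)
        rwa [e] at h2
      · exact absurd h2 (Finset.notMem_empty _)
    · intro hj
      refine Or.inl ⟨by simpa using j.isLt, ?_⟩
      have e : (⟨0 + (j : ℕ), by simpa using j.isLt⟩ : Fin n) = j := Fin.ext (by simp)
      rw [e]; exact hj
  rw [hout1, hinn1, hout0, hinn0] at key
  have hcoll : f (charVec (insert (⟨n - 1, Nat.sub_lt hn Nat.one_pos⟩ : Fin n) I)) ⊓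
      f (charVec (∅ : Finset (Fin n))) ≤ f (charVec I) :=
    le_trans inf_le_right (beta_mono hf (Finset.empty_subset I))
  rw [sup_eq_left.mpr hcoll] at key
  exact key

lemma M2 (hn : 1 ≤ n) (hf : IsPolynomialFn f) (hassoc : AssocFin f)
    (I : Finset (Fin n)) (hzero : (⟨0, hn⟩ : Fin n) ∉ I) :
    f (charVec I) = f (charVec (∅ : Finset (Fin n))) ⊔
      (f (charVec ({⟨n - 1, Nat.sub_lt hn Nat.one_pos⟩} : Finset (Fin n))) ⊓ f (charVec I)) := by
  have key := master hn hf hassoc (Sgen n ∅ I) 0 (n - 1) (by omega) le_rfl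
  have hout0 : outF n (Sgen n ∅ I) 0 = I := by
    ext i
    rw [mem_outF_Sgen hn ∅ I 0 (by omega)]
    constructor
    · rintro (⟨h1, _⟩ | ⟨_, h2⟩)
      · omega
      · exact h2
    · intro hi
      refine Or.inr ⟨?_, hi⟩
      rcases Nat.eq_zero_or_pos (i : ℕ) |>.symm with h | h
      · exact h
      · exfalso
        apply hzero
        have e : i = (⟨0, hn⟩ : Fin n) := Fin.ext (by simp [h])
        rwa [e] at hi
  have hinn0 : innF n (Sgen n ∅ I) 0 = ∅ := by
    ext j
    simp only [Finset.notMem_empty, iff_false]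
    rw [mem_innF_Sgen]
    rintro (⟨h1, h2⟩ | ⟨h1, h2⟩)
    · exact absurd h2 (Finset.notMem_empty _)
    · apply hzero
      have e : (⟨0 + (j : ℕ) - (n - 1), h1.2⟩ : Fin n) = ⟨0, hn⟩ := by
        refine Fin.ext ?_
        have := j.isLt
        simp
        omega
      rwa [e] at h2
  have hout1 : outF n (Sgen n ∅ I) (n - 1) = ∅ := by
    ext i
    simp only [Finset.notMem_empty, iff_false]
    rw [mem_outF_Sgen hn ∅ I (n - 1) le_rfl]
    rintro (⟨_, h2⟩ | ⟨h1, _⟩)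
    · exact absurd h2 (Finset.notMem_empty _)
    · have := i.isLt; omega
  have hinn1 : innF n (Sgen n ∅ I) (n - 1) = I := by
    ext j
    rw [mem_innF_Sgen]
    constructor
    · rintro (⟨h1, h2⟩ | ⟨h1, h2⟩)
      · exact absurd h2 (Finset.notMem_empty _)
      · have e : (⟨n - 1 + (j : ℕ) - (n - 1), h1.2⟩ : Fin n) = j := Fin.ext (by simp)
        rwa [e] at h2
    · intro hj
      refine Or.inr ⟨⟨by omega, by omega⟩, ?_⟩
      have e : (⟨n - 1 + (j : ℕ) - (n - 1), by omega⟩ : Fin n) = j := Fin.ext (by simp)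
      rw [e]; exact hj
  rw [hout0, hinn0, hout1, hinn1] at key
  have hcoll : f (charVec (insert (⟨0, hn⟩ : Fin n) I)) ⊓
      f (charVec (∅ : Finset (Fin n))) ≤ f (charVec I) :=
    le_trans inf_le_right (beta_mono hf (Finset.empty_subset I))
  rw [sup_eq_left.mpr hcoll] at key
  exact key

end MLem
section MLem2
set_option linter.unusedSectionVars false
open Finset
variable {L : Type*} [DistribLattice L] [BoundedOrder L] {n : ℕ} {f : (Fin n → L) → L}

lemma M3 (hn : 1 ≤ n) (hf : IsPolynomialFn f) (hassoc : AssocFin f)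
    (j : ℕ) (hj0 : 0 < j) (hj1 : j < n - 1) :
    f (charVec (∅ : Finset (Fin n))) ⊔
      (f (charVec ({⟨0, hn⟩} : Finset (Fin n))) ⊓
        f (charVec ({⟨n - 1, Nat.sub_lt hn Nat.one_pos⟩} : Finset (Fin n))))
    = f (charVec (∅ : Finset (Fin n))) ⊔
      (f (charVec ({⟨j, by omega⟩} : Finset (Fin n))) ⊓
        f (charVec ({⟨n - 1 - j, by omega⟩} : Finset (Fin n)))) := by
  set A : Finset (Fin n) := {⟨n - 1, Nat.sub_lt hn Nat.one_pos⟩} with hA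
  have key := master hn hf hassoc (Sgen n A ∅) 0 j (by omega) (by omega)
  have hout0 : outF n (Sgen n A ∅) 0 = ∅ := by
    ext i
    simp only [Finset.notMem_empty, iff_false]
    rw [mem_outF_Sgen hn A ∅ 0 (by omega)]
    rintro (⟨h1, _⟩ | ⟨_, h2⟩)
    · omega
    · exact absurd h2 (Finset.notMem_empty _)
  have hinn0 : innF n (Sgen n A ∅) 0 = A := by
    ext j'
    rw [mem_innF_Sgen]
    constructor
    · rintro (⟨h1, h2⟩ | ⟨h1, h2⟩)
      · have e : (⟨0 + (j' : ℕ), h1⟩ : Fin n) = j' := Fin.ext (by simp)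
        rwa [e] at h2
      · exact absurd h2 (Finset.notMem_empty _)
    · intro hj'
      refine Or.inl ⟨by simpa using j'.isLt, ?_⟩
      have e : (⟨0 + (j' : ℕ), by simpa using j'.isLt⟩ : Fin n) = j' := Fin.ext (by simp)
      rw [e]; exact hj'
  have houtj : outF n (Sgen n A ∅) j = ∅ := by
    ext i
    simp only [Finset.notMem_empty, iff_false]
    rw [mem_outF_Sgen hn A ∅ j (by omega)]
    rintro (⟨h1, h2⟩ | ⟨_, h2⟩)
    · rw [hA, Finset.mem_singleton] at h2
      have := congrArg Fin.val h2
      simp at this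
      omega
    · exact absurd h2 (Finset.notMem_empty _)
  have hinnj : innF n (Sgen n A ∅) j = {⟨n - 1 - j, by omega⟩} := by
    ext j'
    rw [mem_innF_Sgen, Finset.mem_singleton]
    constructor
    · rintro (⟨h1, h2⟩ | ⟨h1, h2⟩)
      · rw [hA, Finset.mem_singleton] at h2
        have := congrArg Fin.val h2
        simp at this
        exact Fin.ext (by simp; omega)
      · exact absurd h2 (Finset.notMem_empty _)
    · intro hj'
      have hv : (j' : ℕ) = n - 1 - j := congrArg Fin.val hj'
      refine Or.inl ⟨by omega, ?_⟩
      rw [hA, Finset.mem_singleton]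
      exact Fin.ext (by simp; omega)
  rw [hout0, hinn0, houtj, hinnj] at key
  exact key

lemma MC3 (hn : 1 ≤ n) (hf : IsPolynomialFn f) (hassoc : AssocFin f)
    (I : Finset (Fin n)) (j : ℕ) (hj0 : 0 < j) (hj1 : j < n - 1)
    (hjI : (⟨j, by omega⟩ : Fin n) ∉ I) :
    f (charVec I) = f (charVec (I.filter fun i => j < (i : ℕ))) ⊔
      (f (charVec (insert (⟨0, hn⟩ : Fin n) (I.filter fun i => j < (i : ℕ)))) ⊓
        f (charVec (I.filter fun i => (i : ℕ) < j))) := by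
  set A : Finset (Fin n) := I.filter fun i => (i : ℕ) < j with hA
  set B : Finset (Fin n) := I.filter fun i => j < (i : ℕ) with hB
  have key := master hn hf hassoc (Sgen n A B) j 0 (by omega) (by omega)
  have houtj : outF n (Sgen n A B) j = I := by
    ext i
    rw [mem_outF_Sgen hn A B j (by omega)]
    simp only [hA, hB, Finset.mem_filter]
    constructor
    · rintro (⟨h1, h2, _⟩ | ⟨h1, h2, _⟩) <;> exact h2
    · intro hi
      rcases lt_trichotomy (i : ℕ) j with h | h | h
      · exact Or.inl ⟨h, hi, h⟩
      · exfalso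
        apply hjI
        have e : (⟨j, by omega⟩ : Fin n) = i := Fin.ext (by simp [h])
        rwa [e]
      · exact Or.inr ⟨h, hi, h⟩
  have hinnj : innF n (Sgen n A B) j = ∅ := by
    ext j'
    simp only [Finset.notMem_empty, iff_false]
    rw [mem_innF_Sgen]
    rintro (⟨h1, h2⟩ | ⟨h1, h2⟩)
    · rw [hA, Finset.mem_filter] at h2
      have h3 : j + (j' : ℕ) < j := by simpa using h2.2
      omega
    · rw [hB, Finset.mem_filter] at h2
      have h3 : j < j + (j' : ℕ) - (n - 1) := by simpa using h2.2
      have := j'.isLt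
      omega
  have hout0 : outF n (Sgen n A B) 0 = B := by
    ext i
    rw [mem_outF_Sgen hn A B 0 (by omega)]
    constructor
    · rintro (⟨h1, _⟩ | ⟨_, h2⟩)
      · omega
      · exact h2
    · intro hi
      refine Or.inr ⟨?_, hi⟩
      rw [hB, Finset.mem_filter] at hi
      omega
  have hinn0 : innF n (Sgen n A B) 0 = A := by
    ext j'
    rw [mem_innF_Sgen]
    constructor
    · rintro (⟨h1, h2⟩ | ⟨h1, h2⟩)
      · have e : (⟨0 + (j' : ℕ), h1⟩ : Fin n) = j' := Fin.ext (by simp)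
        rwa [e] at h2
      · rw [hB, Finset.mem_filter] at h2
        have h3 : j < 0 + (j' : ℕ) - (n - 1) := by simpa using h2.2
        have := j'.isLt
        omega
    · intro hj'
      refine Or.inl ⟨by simpa using j'.isLt, ?_⟩
      have e : (⟨0 + (j' : ℕ), by simpa using j'.isLt⟩ : Fin n) = j' := Fin.ext (by simp)
      rw [e]; exact hj'
  rw [houtj, hinnj, hout0, hinn0] at key
  have hcoll : f (charVec (insert (⟨j, by omega⟩ : Fin n) I)) ⊓
      f (charVec (∅ : Finset (Fin n))) ≤ f (charVec I) :=
    le_trans inf_le_right (beta_mono hf (Finset.empty_subset I))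
  rw [sup_eq_left.mpr hcoll] at key
  exact key

end MLem2
section CLem
set_option linter.unusedSectionVars false
open Finset
variable {L : Type*} [DistribLattice L] [BoundedOrder L] {n : ℕ} {f : (Fin n → L) → L}

lemma C1 (hn : 1 ≤ n) (hf : IsPolynomialFn f) (hassoc : AssocFin f)
    (I : Finset (Fin n)) (h0 : (⟨0, hn⟩ : Fin n) ∈ I)
    (hl : (⟨n - 1, Nat.sub_lt hn Nat.one_pos⟩ : Fin n) ∉ I) :
    f (charVec I) = f (charVec ({⟨0, hn⟩} : Finset (Fin n))) := by
  apply le_antisymm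
  · rw [M1 hn hf hassoc I hl]
    exact sup_le (beta_mono hf (Finset.empty_subset _)) inf_le_left
  · exact beta_mono hf (Finset.singleton_subset_iff.mpr h0)

lemma C2 (hn : 1 ≤ n) (hf : IsPolynomialFn f) (hassoc : AssocFin f)
    (I : Finset (Fin n)) (h0 : (⟨0, hn⟩ : Fin n) ∉ I)
    (hl : (⟨n - 1, Nat.sub_lt hn Nat.one_pos⟩ : Fin n) ∈ I) :
    f (charVec I) = f (charVec ({⟨n - 1, Nat.sub_lt hn Nat.one_pos⟩} : Finset (Fin n))) := by
  apply le_antisymm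
  · rw [M2 hn hf hassoc I h0]
    exact sup_le (beta_mono hf (Finset.empty_subset _)) inf_le_left
  · exact beta_mono hf (Finset.singleton_subset_iff.mpr hl)

lemma C4 (hn : 1 ≤ n) (hf : IsPolynomialFn f) (hassoc : AssocFin f)
    (I : Finset (Fin n)) (hne : I.Nonempty) (h0 : (⟨0, hn⟩ : Fin n) ∉ I)
    (hl : (⟨n - 1, Nat.sub_lt hn Nat.one_pos⟩ : Fin n) ∉ I) :
    f (charVec I) = f (charVec ({⟨0, hn⟩} : Finset (Fin n))) ⊓
      f (charVec ({⟨n - 1, Nat.sub_lt hn Nat.one_pos⟩} : Finset (Fin n))) := by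
  apply le_antisymm
  · refine le_inf ?_ ?_
    · rw [M1 hn hf hassoc I hl]
      exact sup_le (beta_mono hf (Finset.empty_subset _)) inf_le_left
    · rw [M2 hn hf hassoc I h0]
      exact sup_le (beta_mono hf (Finset.empty_subset _)) inf_le_left
  · obtain ⟨i, hi⟩ := hne
    have hj0 : 0 < (i : ℕ) := by
      rcases Nat.eq_zero_or_pos (i : ℕ) with h | h
      · exact absurd (show (⟨0, hn⟩ : Fin n) ∈ I from by
          rwa [show (⟨0, hn⟩ : Fin n) = i from Fin.ext (by simp [h])]) h0
      · exact h
    have hj1 : (i : ℕ) < n - 1 := by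
      rcases Nat.lt_or_ge (i : ℕ) (n - 1) with h | h
      · exact h
      · have hv : (i : ℕ) = n - 1 := by have := i.isLt; omega
        exact absurd (show (⟨n - 1, Nat.sub_lt hn Nat.one_pos⟩ : Fin n) ∈ I from by
          rwa [show (⟨n - 1, Nat.sub_lt hn Nat.one_pos⟩ : Fin n) = i from Fin.ext (by simp [hv])]) hl
    calc f (charVec ({⟨0, hn⟩} : Finset (Fin n))) ⊓
          f (charVec ({⟨n - 1, Nat.sub_lt hn Nat.one_pos⟩} : Finset (Fin n)))
        ≤ f (charVec (∅ : Finset (Fin n))) ⊔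
          (f (charVec ({⟨0, hn⟩} : Finset (Fin n))) ⊓
            f (charVec ({⟨n - 1, Nat.sub_lt hn Nat.one_pos⟩} : Finset (Fin n)))) := le_sup_right
      _ = f (charVec (∅ : Finset (Fin n))) ⊔
          (f (charVec ({⟨(i : ℕ), by omega⟩} : Finset (Fin n))) ⊓
            f (charVec ({⟨n - 1 - (i : ℕ), by omega⟩} : Finset (Fin n)))) :=
            M3 hn hf hassoc (i : ℕ) hj0 hj1
      _ ≤ f (charVec (∅ : Finset (Fin n))) ⊔
            f (charVec ({⟨(i : ℕ), by omega⟩} : Finset (Fin n))) :=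
            sup_le_sup_left inf_le_left _
      _ ≤ f (charVec I) := by
            refine sup_le (beta_mono hf (Finset.empty_subset _)) ?_
            refine beta_mono hf (Finset.singleton_subset_iff.mpr ?_)
            rwa [show (⟨(i : ℕ), by omega⟩ : Fin n) = i from Fin.ext rfl]

lemma C3 (hn : 1 ≤ n) (hf : IsPolynomialFn f) (hassoc : AssocFin f)
    (I : Finset (Fin n)) (h0 : (⟨0, hn⟩ : Fin n) ∈ I)
    (hl : (⟨n - 1, Nat.sub_lt hn Nat.one_pos⟩ : Fin n) ∈ I) (hne : I ≠ Finset.univ) :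
    f (charVec I) = f (charVec ({⟨0, hn⟩} : Finset (Fin n))) ⊔
      f (charVec ({⟨n - 1, Nat.sub_lt hn Nat.one_pos⟩} : Finset (Fin n))) := by
  obtain ⟨j, hj⟩ : ∃ j : Fin n, j ∉ I := by
    by_contra hcon
    push_neg at hcon
    exact hne (Finset.eq_univ_iff_forall.mpr hcon)
  have hj0 : 0 < (j : ℕ) := by
    rcases Nat.eq_zero_or_pos (j : ℕ) with h | h
    · exact absurd (show j ∈ I from by
        rwa [show j = (⟨0, hn⟩ : Fin n) from Fin.ext (by simp [h])]) hj
    · exact h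
  have hj1 : (j : ℕ) < n - 1 := by
    rcases Nat.lt_or_ge (j : ℕ) (n - 1) with h | h
    · exact h
    · have hv : (j : ℕ) = n - 1 := by have := j.isLt; omega
      exact absurd (show j ∈ I from by
        rwa [show j = (⟨n - 1, Nat.sub_lt hn Nat.one_pos⟩ : Fin n) from Fin.ext (by simp [hv])]) hj
  have hjI : (⟨(j : ℕ), by omega⟩ : Fin n) ∉ I := by
    rwa [show (⟨(j : ℕ), by omega⟩ : Fin n) = j from Fin.ext rfl]
  have key := MC3 hn hf hassoc I (j : ℕ) hj0 hj1 hjI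
  have hBc : f (charVec (I.filter fun i => (j : ℕ) < (i : ℕ)))
      = f (charVec ({⟨n - 1, Nat.sub_lt hn Nat.one_pos⟩} : Finset (Fin n))) := by
    refine C2 hn hf hassoc _ ?_ ?_
    · simp only [Finset.mem_filter]
      rintro ⟨-, h⟩
      omega
    · simp only [Finset.mem_filter]
      refine ⟨hl, ?_⟩
      show (j : ℕ) < n - 1
      omega
  have hAb : f (charVec (I.filter fun i => (i : ℕ) < (j : ℕ)))
      = f (charVec ({⟨0, hn⟩} : Finset (Fin n))) := by
    refine C1 hn hf hassoc _ ?_ ?_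
    · simp only [Finset.mem_filter]
      refine ⟨h0, ?_⟩
      show (0 : ℕ) < (j : ℕ)
      omega
    · simp only [Finset.mem_filter]
      rintro ⟨-, h⟩
      have h2 : n - 1 < (j : ℕ) := h
      omega
  rw [hBc, hAb] at key
  have hmono : f (charVec ({⟨0, hn⟩} : Finset (Fin n)))
      ≤ f (charVec (insert (⟨0, hn⟩ : Fin n)
        (I.filter fun i => (j : ℕ) < (i : ℕ)))) :=
    beta_mono hf (Finset.singleton_subset_iff.mpr (Finset.mem_insert_self _ _))
  rw [inf_eq_right.mpr hmono] at key
  rw [key, sup_comm]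
end CLem

/-- an associative lattice polynomial function `f : Lⁿ → L` has the form
`f(x) = a ∨ (b ∧ x₁) ∨ ⋁ᵢ (b ∧ c ∧ xᵢ) ∨ (c ∧ xₙ) ∨ (d ∧ ⋀ᵢ xᵢ)` where
`a = f(0,…,0)`, `b = f(1,0,…,0)`, `c = f(0,…,0,1)`, `d = f(1,…,1)`. -/
theorem stmt10 {n : ℕ} (hn : 1 ≤ n) (f : (Fin n → L) → L)
    (hf : IsPolynomialFn f) (hassoc : AssocFin f)
    (a b c d : L)
    (ha : a = f fun _ => ⊥)
    (hb : b = f (charVec {(⟨0, by omega⟩ : Fin n)}))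
    (hc : c = f (charVec {(⟨n - 1, by omega⟩ : Fin n)}))
    (hd : d = f fun _ => ⊤)
    (x : Fin n → L) :
    f x = a ⊔ (b ⊓ x ⟨0, by omega⟩) ⊔ (Finset.univ.sup fun i => b ⊓ c ⊓ x i) ⊔
      (c ⊓ x ⟨n - 1, by omega⟩) ⊔ (d ⊓ Finset.univ.inf x) := by
  
  have hbot : (fun _ : Fin n => (⊥ : L)) = charVec (∅ : Finset (Fin n)) := by
    funext i; simp [charVec]
  have htop : (fun _ : Fin n => (⊤ : L)) = charVec (Finset.univ : Finset (Fin n)) := by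
    funext i; simp [charVec]
  subst ha hb hc hd
  rw [hbot, htop, canon hf x]
  apply le_antisymm
  · refine Finset.sup_le fun I _ => ?_
    by_cases h0 : (⟨0, by omega⟩ : Fin n) ∈ I
    · by_cases hl : (⟨n - 1, by omega⟩ : Fin n) ∈ I
      · by_cases hu : I = Finset.univ
        · subst hu
          exact le_sup_right
        · rw [C3 hn hf hassoc I h0 hl hu, inf_sup_right]
          refine sup_le ?_ ?_
          · refine le_trans (inf_le_inf_left _ (Finset.inf_le h0)) ?_
            exact le_sup_of_le_left (le_sup_of_le_left (le_sup_of_le_left le_sup_right))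
          · refine le_trans (inf_le_inf_left _ (Finset.inf_le hl)) ?_
            exact le_sup_of_le_left le_sup_right
      · rw [C1 hn hf hassoc I h0 hl]
        refine le_trans (inf_le_inf_left _ (Finset.inf_le h0)) ?_
        exact le_sup_of_le_left (le_sup_of_le_left (le_sup_of_le_left le_sup_right))
    · by_cases hl : (⟨n - 1, by omega⟩ : Fin n) ∈ I
      · rw [C2 hn hf hassoc I h0 hl]
        refine le_trans (inf_le_inf_left _ (Finset.inf_le hl)) ?_
        exact le_sup_of_le_left le_sup_right
      · rcases Finset.eq_empty_or_nonempty I with he | hne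
        · subst he
          simp only [Finset.inf_empty, inf_top_eq]
          exact le_sup_of_le_left
            (le_sup_of_le_left (le_sup_of_le_left (le_sup_of_le_left le_rfl)))
        · obtain ⟨i, hi⟩ := hne
          rw [C4 hn hf hassoc I ⟨i, hi⟩ h0 hl]
          refine le_trans (inf_le_inf_left _ (Finset.inf_le hi)) ?_
          refine le_sup_of_le_left (le_sup_of_le_left (le_sup_of_le_right ?_))
          exact Finset.le_sup (f := fun i : Fin n =>
            f (charVec ({⟨0, by omega⟩} : Finset (Fin n))) ⊓
              f (charVec ({⟨n - 1, by omega⟩} : Finset (Fin n))) ⊓ x i) (Finset.mem_univ i)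
  · refine sup_le (sup_le (sup_le (sup_le ?_ ?_) ?_) ?_) ?_
    · refine le_trans ?_ (Finset.le_sup (f := fun I : Finset (Fin n) =>
        f (charVec I) ⊓ I.inf x) (Finset.mem_univ (∅ : Finset (Fin n))))
      simp
    · refine le_trans ?_ (Finset.le_sup (f := fun I : Finset (Fin n) =>
        f (charVec I) ⊓ I.inf x) (Finset.mem_univ ({⟨0, by omega⟩} : Finset (Fin n))))
      simp only [Finset.inf_singleton]
      exact le_rfl
    · refine Finset.sup_le fun i _ => ?_
      by_cases hi0 : i = (⟨0, by omega⟩ : Fin n)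
      · subst hi0
        refine le_trans ?_ (Finset.le_sup (f := fun I : Finset (Fin n) =>
          f (charVec I) ⊓ I.inf x) (Finset.mem_univ ({⟨0, by omega⟩} : Finset (Fin n))))
        simp only [Finset.inf_singleton]
        exact inf_le_inf_right _ inf_le_left
      · by_cases hil : i = (⟨n - 1, by omega⟩ : Fin n)
        · subst hil
          refine le_trans ?_ (Finset.le_sup (f := fun I : Finset (Fin n) =>
            f (charVec I) ⊓ I.inf x) (Finset.mem_univ ({⟨n - 1, by omega⟩} : Finset (Fin n))))
          simp only [Finset.inf_singleton]
          exact inf_le_inf_right _ inf_le_right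
        · refine le_trans ?_ (Finset.le_sup (f := fun I : Finset (Fin n) =>
            f (charVec I) ⊓ I.inf x) (Finset.mem_univ ({i} : Finset (Fin n))))
          simp only [Finset.inf_singleton]
          rw [C4 hn hf hassoc {i} ⟨i, Finset.mem_singleton_self i⟩
            (by simp only [Finset.mem_singleton]; exact fun h => hi0 h.symm)
            (by simp only [Finset.mem_singleton]; exact fun h => hil h.symm)]
    · refine le_trans ?_ (Finset.le_sup (f := fun I : Finset (Fin n) =>
        f (charVec I) ⊓ I.inf x) (Finset.mem_univ ({⟨n - 1, by omega⟩} : Finset (Fin n))))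
      simp only [Finset.inf_singleton]
      exact le_rfl
    · exact Finset.le_sup (f := fun I : Finset (Fin n) =>
        f (charVec I) ⊓ I.inf x) (Finset.mem_univ (Finset.univ : Finset (Fin n)))
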